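/- For admissible parameters (λ,β) and (λ',β'), the algebras B'(λ,β) and B'(λ',β') are isomorphic as ℝ-algebras (i.e., there exists a linear bijection φ with φ(x∘'y) = φ(x)∘φ(y)) if and only if λ' = λ and (β' = β or β' = 1−β); in particular, if (λ',β') ≠ (λ,β) then they are isomorphic if and only if λ' = λ and β' = 1−β, an isomorphism being given by the basis change (o, a, b, ab) ↦ (o, b, a, ab). -/

import Mathlib

/-- The multiplication of the generalized ABO-blood type algebra `B'(l, β)` on `ℝ⁴`,
with ordered basis `o = e₀`, `a = e₁`, `b = e₂`, `ab = e₃`, determined by bilinearity,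
commutativity and: `o∘o = o`, `o∘a = l•a`, `o∘b = l•b`, `a∘a = a`, `b∘b = b`,
`a∘b = ((l-β)/l)•a + ((l+β-1)/l)•b + ab`, `o∘ab = a∘ab = b∘ab = ab∘ab = 0`. -/
noncomputable def Bmul (l β : ℝ) (x y : Fin 4 → ℝ) : Fin 4 → ℝ :=
  ![x 0 * y 0,
    l * (x 0 * y 1 + x 1 * y 0) + x 1 * y 1 + (l - β) / l * (x 1 * y 2 + x 2 * y 1),
    l * (x 0 * y 2 + x 2 * y 0) + x 2 * y 2 + (l + β - 1) / l * (x 1 * y 2 + x 2 * y 1),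
    x 1 * y 2 + x 2 * y 1]

/-- The basis vector `o`. -/
noncomputable def vo : Fin 4 → ℝ := ![1, 0, 0, 0]
/-- The basis vector `a`. -/
noncomputable def va : Fin 4 → ℝ := ![0, 1, 0, 0]
/-- The basis vector `b`. -/
noncomputable def vb : Fin 4 → ℝ := ![0, 0, 1, 0]
/-- The basis vector `ab`. -/
noncomputable def vab : Fin 4 → ℝ := ![0, 0, 0, 1]

/-- `B'(l', β')` and `B'(l, β)` are isomorphic as (nonassociative) ℝ-algebras:
there is a linear bijection `φ` with `φ(x ∘' y) = φ(x) ∘ φ(y)`. -/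
noncomputable def BIso (l' β' l β : ℝ) : Prop :=
  ∃ φ : (Fin 4 → ℝ) ≃ₗ[ℝ] (Fin 4 → ℝ),
    ∀ x y : Fin 4 → ℝ, φ (Bmul l' β' x y) = Bmul l β (φ x) (φ y)

section prods
variable (l β : ℝ)

lemma Pvoo : Bmul l β vo vo = vo := by funext i; fin_cases i <;> simp [Bmul, vo]
lemma Pvoa : Bmul l β vo va = l • va := by funext i; fin_cases i <;> simp [Bmul, vo, va]
lemma Pvob : Bmul l β vo vb = l • vb := by funext i; fin_cases i <;> simp [Bmul, vo, vb]
lemma Pvaa : Bmul l β va va = va := by funext i; fin_cases i <;> simp [Bmul, va]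
lemma Pvbb : Bmul l β vb vb = vb := by funext i; fin_cases i <;> simp [Bmul, vb]
lemma Pvab : Bmul l β va vb = ((l - β)/l) • va + ((l + β - 1)/l) • vb + vab := by
  funext i; fin_cases i <;> simp [Bmul, va, vb, vab]
lemma Pvaab : Bmul l β va vab = 0 := by funext i; fin_cases i <;> simp [Bmul, va, vab]
lemma Pvbab : Bmul l β vb vab = 0 := by funext i; fin_cases i <;> simp [Bmul, vb, vab]

end prods

lemma classify (l β l' g0 g1 g2 e1 e2 e3 : ℝ)
    (hge1 : l' * e1 = l * (g0 * e1 + g1 * 0) + g1 * e1 + (l - β)/l * (g1 * e2 + g2 * e1))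
    (hge2 : l' * e2 = l * (g0 * e2 + g2 * 0) + g2 * e2 + (l + β - 1)/l * (g1 * e2 + g2 * e1))
    (hge3 : l' * e3 = g1 * e2 + g2 * e1)
    (hee1 : e1 = l * (0 * e1 + e1 * 0) + e1 * e1 + (l - β)/l * (e1 * e2 + e2 * e1))
    (hee2 : e2 = l * (0 * e2 + e2 * 0) + e2 * e2 + (l + β - 1)/l * (e1 * e2 + e2 * e1))
    (hee3 : e3 = e1 * e2 + e2 * e1)
    (hne : ¬ (e1 = 0 ∧ e2 = 0)) :
    (e1 = 1 ∧ e2 = 0 ∧ g2 = 0 ∧ l * g0 + g1 = l') ∨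
    (e1 = 0 ∧ e2 = 1 ∧ g1 = 0 ∧ l * g0 + g2 = l') ∨
    (e1 ≠ 0 ∧ e2 ≠ 0 ∧ e1 + 2*((l - β)/l)*e2 = 1 ∧ 2*((l + β - 1)/l)*e1 + e2 = 1 ∧
      g1 * e2 + g2 * e1 = 2*l'*e1*e2 ∧
      l*g0 + g1 + 2*((l - β)/l)*l'*e2 = l' ∧ l*g0 + g2 + 2*((l + β - 1)/l)*l'*e1 = l') := by
  rcases eq_or_ne e1 0 with h1 | h1 <;> rcases eq_or_ne e2 0 with h2 | h2
  · exact absurd ⟨h1, h2⟩ hne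
  · subst h1
    have he2 : e2 = 1 := by
      have h : e2 * (e2 - 1) = 0 := by linear_combination -hee2
      rcases mul_eq_zero.mp h with h | h
      · exact absurd h h2
      · linarith
    subst he2
    have he3 : e3 = 0 := by linear_combination hee3
    subst he3
    have hg1 : g1 = 0 := by linear_combination -hge3
    subst hg1
    exact Or.inr (Or.inl ⟨rfl, rfl, rfl, by linear_combination -hge2⟩)
  · subst h2
    have he1 : e1 = 1 := by
      have h : e1 * (e1 - 1) = 0 := by linear_combination -hee1
      rcases mul_eq_zero.mp h with h | h
      · exact absurd h h1
      · linarith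
    subst he1
    have he3 : e3 = 0 := by linear_combination hee3
    subst he3
    have hg2 : g2 = 0 := by linear_combination -hge3
    subst hg2
    exact Or.inl ⟨rfl, rfl, rfl, by linear_combination -hge1⟩
  · have k1 : e1 + 2*((l - β)/l)*e2 = 1 := by
      have h : e1 * (e1 + 2*((l - β)/l)*e2 - 1) = 0 := by linear_combination -hee1
      rcases mul_eq_zero.mp h with h | h
      · exact absurd h h1
      · linarith
    have k2 : 2*((l + β - 1)/l)*e1 + e2 = 1 := by
      have h : e2 * (2*((l + β - 1)/l)*e1 + e2 - 1) = 0 := by linear_combination -hee2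
      rcases mul_eq_zero.mp h with h | h
      · exact absurd h h2
      · linarith
    have k3 : g1 * e2 + g2 * e1 = 2*l'*e1*e2 := by
      linear_combination -hge3 + l' * hee3
    have k4 : l*g0 + g1 + 2*((l - β)/l)*l'*e2 = l' := by
      have h : e1 * (l*g0 + g1 + 2*((l - β)/l)*l'*e2 - l') = 0 := by
        linear_combination -hge1 - (l - β)/l * k3
      rcases mul_eq_zero.mp h with h | h
      · exact absurd h h1
      · linarith
    have k5 : l*g0 + g2 + 2*((l + β - 1)/l)*l'*e1 = l' := by
      have h : e2 * (l*g0 + g2 + 2*((l + β - 1)/l)*l'*e1 - l') = 0 := by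
        linear_combination -hge2 - (l + β - 1)/l * k3
      rcases mul_eq_zero.mp h with h | h
      · exact absurd h h2
      · linarith
    exact Or.inr (Or.inr ⟨h1, h2, k1, k2, k3, k4, k5⟩)

/-- The hard direction. -/
lemma BIso_necessary {l β l' β' : ℝ} (hl0 : 0 < l) (hl1 : l < 1) (hβ0 : 0 < β) (hβ1 : β < 1)
    (hl0' : 0 < l') (hl1' : l' < 1) (hβ0' : 0 < β') (hβ1' : β' < 1)
    (h : BIso l' β' l β) : l' = l ∧ (β' = β ∨ β' = 1 - β) := by
  obtain ⟨φ, hφ⟩ := h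
  have hlne : l ≠ 0 := hl0.ne'
  have hlne' : l' ≠ 0 := hl0'.ne'
  have hGG : φ vo = Bmul l β (φ vo) (φ vo) := by have := hφ vo vo; rwa [Pvoo] at this
  have hGE : l' • (φ va) = Bmul l β (φ vo) (φ va) := by
    have := hφ vo va; rwa [Pvoa, map_smul] at this
  have hGF : l' • (φ vb) = Bmul l β (φ vo) (φ vb) := by
    have := hφ vo vb; rwa [Pvob, map_smul] at this
  have hEE : φ va = Bmul l β (φ va) (φ va) := by have := hφ va va; rwa [Pvaa] at this
  have hFF : φ vb = Bmul l β (φ vb) (φ vb) := by have := hφ vb vb; rwa [Pvbb] at this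
  have hEF : ((l' - β')/l') • (φ va) + ((l' + β' - 1)/l') • (φ vb) + (φ vab)
      = Bmul l β (φ va) (φ vb) := by
    have := hφ va vb; rwa [Pvab, map_add, map_add, map_smul, map_smul] at this
  have hEW : (0 : Fin 4 → ℝ) = Bmul l β (φ va) (φ vab) := by
    have := hφ va vab; rwa [Pvaab, map_zero] at this
  have hFW : (0 : Fin 4 → ℝ) = Bmul l β (φ vb) (φ vab) := by
    have := hφ vb vab; rwa [Pvbab, map_zero] at this
  have hEne0 : φ va ≠ 0 := by
    rw [Ne, LinearEquiv.map_eq_zero_iff]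
    intro hz
    have := congrFun hz 1
    simp [va] at this
  have hFne0 : φ vb ≠ 0 := by
    rw [Ne, LinearEquiv.map_eq_zero_iff]
    intro hz
    have := congrFun hz 2
    simp [vb] at this
  have hEFne0 : φ va ≠ φ vb := by
    intro hz
    have := congrFun (φ.injective hz) 1
    simp [va, vb] at this
  obtain ⟨G, hG⟩ : ∃ g, φ vo = g := ⟨_, rfl⟩
  obtain ⟨E, hE⟩ : ∃ g, φ va = g := ⟨_, rfl⟩
  obtain ⟨F, hF⟩ : ∃ g, φ vb = g := ⟨_, rfl⟩
  obtain ⟨W, hW⟩ : ∃ g, φ vab = g := ⟨_, rfl⟩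
  simp only [hG, hE, hF, hW] at hGG hGE hGF hEE hFF hEF hEW hFW hEne0 hFne0 hEFne0
  clear hφ hG hE hF hW
  have cGG0 : G 0 = G 0 * G 0 := congrFun hGG 0
  have cGE0 : l' * E 0 = G 0 * E 0 := congrFun hGE 0
  have cGF0 : l' * F 0 = G 0 * F 0 := congrFun hGF 0
  have hE0 : E 0 = 0 := by
    by_contra hne
    have h : (G 0 - l') * E 0 = 0 := by linear_combination -cGE0
    rcases mul_eq_zero.mp h with h | h
    · have hg : G 0 = l' := by linear_combination h
      rw [hg] at cGG0
      have h2 : l' * (l' - 1) = 0 := by linear_combination -cGG0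
      rcases mul_eq_zero.mp h2 with h2 | h2
      · exact hlne' h2
      · linarith only [h2, hl1']
    · exact hne h
  have hF0 : F 0 = 0 := by
    by_contra hne
    have h : (G 0 - l') * F 0 = 0 := by linear_combination -cGF0
    rcases mul_eq_zero.mp h with h | h
    · have hg : G 0 = l' := by linear_combination h
      rw [hg] at cGG0
      have h2 : l' * (l' - 1) = 0 := by linear_combination -cGG0
      rcases mul_eq_zero.mp h2 with h2 | h2
      · exact hlne' h2
      · linarith only [h2, hl1']
    · exact hne h
  have cGE1 : l' * E 1 = l * (G 0 * E 1 + G 1 * E 0) + G 1 * E 1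
      + (l - β)/l * (G 1 * E 2 + G 2 * E 1) := congrFun hGE 1
  have cGE2 : l' * E 2 = l * (G 0 * E 2 + G 2 * E 0) + G 2 * E 2
      + (l + β - 1)/l * (G 1 * E 2 + G 2 * E 1) := congrFun hGE 2
  have cGE3 : l' * E 3 = G 1 * E 2 + G 2 * E 1 := congrFun hGE 3
  have cGF1 : l' * F 1 = l * (G 0 * F 1 + G 1 * F 0) + G 1 * F 1
      + (l - β)/l * (G 1 * F 2 + G 2 * F 1) := congrFun hGF 1
  have cGF2 : l' * F 2 = l * (G 0 * F 2 + G 2 * F 0) + G 2 * F 2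
      + (l + β - 1)/l * (G 1 * F 2 + G 2 * F 1) := congrFun hGF 2
  have cGF3 : l' * F 3 = G 1 * F 2 + G 2 * F 1 := congrFun hGF 3
  have cEE1 : E 1 = l * (E 0 * E 1 + E 1 * E 0) + E 1 * E 1
      + (l - β)/l * (E 1 * E 2 + E 2 * E 1) := congrFun hEE 1
  have cEE2 : E 2 = l * (E 0 * E 2 + E 2 * E 0) + E 2 * E 2
      + (l + β - 1)/l * (E 1 * E 2 + E 2 * E 1) := congrFun hEE 2
  have cEE3 : E 3 = E 1 * E 2 + E 2 * E 1 := congrFun hEE 3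
  have cFF1 : F 1 = l * (F 0 * F 1 + F 1 * F 0) + F 1 * F 1
      + (l - β)/l * (F 1 * F 2 + F 2 * F 1) := congrFun hFF 1
  have cFF2 : F 2 = l * (F 0 * F 2 + F 2 * F 0) + F 2 * F 2
      + (l + β - 1)/l * (F 1 * F 2 + F 2 * F 1) := congrFun hFF 2
  have cFF3 : F 3 = F 1 * F 2 + F 2 * F 1 := congrFun hFF 3
  rw [hE0] at cGE1 cGE2 cEE1 cEE2
  rw [hF0] at cGF1 cGF2 cFF1 cFF2
  have hEne : ¬ (E 1 = 0 ∧ E 2 = 0) := by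
    rintro ⟨h1, h2⟩
    have hEz : E = 0 := by
      funext i; fin_cases i
      · show E 0 = 0; exact hE0
      · show E 1 = 0; exact h1
      · show E 2 = 0; exact h2
      · show E 3 = 0; rw [cEE3, h1, h2]; ring
    exact hEne0 hEz
  have hFne : ¬ (F 1 = 0 ∧ F 2 = 0) := by
    rintro ⟨h1, h2⟩
    have hFz : F = 0 := by
      funext i; fin_cases i
      · show F 0 = 0; exact hF0
      · show F 1 = 0; exact h1
      · show F 2 = 0; exact h2
      · show F 3 = 0; rw [cFF3, h1, h2]; ring
    exact hFne0 hFz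
  have hEFne : ¬ (E 1 = F 1 ∧ E 2 = F 2) := by
    rintro ⟨h1, h2⟩
    have hEeF : E = F := by
      funext i; fin_cases i
      · show E 0 = F 0; rw [hE0, hF0]
      · show E 1 = F 1; exact h1
      · show E 2 = F 2; exact h2
      · show E 3 = F 3; rw [cEE3, cFF3, h1, h2]
    exact hEFne0 hEeF
  have hdne1 : (l + β - 1)/l ≠ 1 := by
    intro h; rw [div_eq_iff hlne] at h; linarith only [h, hβ1]
  have hcne1 : (l - β)/l ≠ 1 := by
    intro h; rw [div_eq_iff hlne] at h; linarith only [h, hβ0]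
  have CE := classify l β l' (G 0) (G 1) (G 2) (E 1) (E 2) (E 3)
    cGE1 cGE2 cGE3 cEE1 cEE2 cEE3 hEne
  have CF := classify l β l' (G 0) (G 1) (G 2) (F 1) (F 2) (F 3)
    cGF1 cGF2 cGF3 cFF1 cFF2 cFF3 hFne
  rcases CE with ⟨hE1, hE2, hg2, hsE⟩ | ⟨hE1, hE2, hg1, hsE⟩ |
      ⟨hE1, hE2, kE1, kE2, kE3, kE4, kE5⟩ <;>
    rcases CF with ⟨hF1, hF2, hg2', hsF⟩ | ⟨hF1, hF2, hg1', hsF⟩ |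
      ⟨hF1, hF2, kF1, kF2, kF3, kF4, kF5⟩
  · -- E a-type, F a-type: E = F, contradiction
    exact absurd ⟨hE1.trans hF1.symm, hE2.trans hF2.symm⟩ hEFne
  · -- E a-type, F b-type : main case β' = β
    have hl'eq : l * G 0 = l' := by linear_combination hsE - hg1'
    have h : G 0 * (G 0 - 1) = 0 := by linear_combination -cGG0
    have hll : l' = l := by
      rcases mul_eq_zero.mp h with h | h
      · exfalso; apply hlne'; linear_combination -hl'eq + l * h
      · linear_combination -hl'eq + l * h
    have cEF2 : (l' - β')/l' * E 2 + (l' + β' - 1)/l' * F 2 + W 2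
        = l * (E 0 * F 2 + E 2 * F 0) + E 2 * F 2
          + (l + β - 1)/l * (E 1 * F 2 + E 2 * F 1) := by
      exact congrFun hEF 2
    have cEW3 : (0:ℝ) = E 1 * W 2 + E 2 * W 1 := by
      exact congrFun hEW 3
    simp only [hE0, hE1, hE2, hF0, hF1, hF2] at cEF2 cEW3
    have hw2 : W 2 = 0 := by linear_combination -cEW3
    have hd : (l' + β' - 1)/l' = (l + β - 1)/l := by linear_combination cEF2 - hw2
    refine ⟨hll, Or.inl ?_⟩
    rw [hll, div_eq_div_iff hlne hlne] at hd
    have := mul_right_cancel₀ hlne hd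
    linarith only [this]
  · -- E a-type, F mixed : contradiction
    exfalso
    have hgg1 : G 1 * F 2 = 2*l'*F 1*F 2 := by linear_combination kF3 - F 1 * hg2
    have h1 : G 1 = 2*l'*F 1 := by
      have h : (G 1 - 2*l'*F 1) * F 2 = 0 := by linear_combination hgg1
      rcases mul_eq_zero.mp h with h | h
      · linear_combination h
      · exact absurd h hF2
    have h2 : G 1 = 2*((l + β - 1)/l)*l'*F 1 := by linear_combination hsE - kF5 + hg2
    have h3 : 2*l'*F 1 * (1 - (l + β - 1)/l) = 0 := by linear_combination h2 - h1
    rcases mul_eq_zero.mp h3 with h | h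
    · rcases mul_eq_zero.mp h with h | h
      · norm_num at h; exact hlne' h
      · exact hF1 h
    · apply hdne1; linear_combination -h
  · -- E b-type, F a-type : main case β' = 1 - β
    have hl'eq : l * G 0 = l' := by linear_combination hsF - hg1
    have h : G 0 * (G 0 - 1) = 0 := by linear_combination -cGG0
    have hll : l' = l := by
      rcases mul_eq_zero.mp h with h | h
      · exfalso; apply hlne'; linear_combination -hl'eq + l * h
      · linear_combination -hl'eq + l * h
    have cEF1 : (l' - β')/l' * E 1 + (l' + β' - 1)/l' * F 1 + W 1
        = l * (E 0 * F 1 + E 1 * F 0) + E 1 * F 1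
          + (l - β)/l * (E 1 * F 2 + E 2 * F 1) := by
      exact congrFun hEF 1
    have cEW3 : (0:ℝ) = E 1 * W 2 + E 2 * W 1 := by
      exact congrFun hEW 3
    simp only [hE0, hE1, hE2, hF0, hF1, hF2] at cEF1 cEW3
    have hw1 : W 1 = 0 := by linear_combination -cEW3
    have hd : (l' + β' - 1)/l' = (l - β)/l := by linear_combination cEF1 - hw1
    refine ⟨hll, Or.inr ?_⟩
    rw [hll, div_eq_div_iff hlne hlne] at hd
    have := mul_right_cancel₀ hlne hd
    linarith only [this]
  · -- E b-type, F b-type : contradiction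
    exact absurd ⟨hE1.trans hF1.symm, hE2.trans hF2.symm⟩ hEFne
  · -- E b-type, F mixed : contradiction
    exfalso
    have hgg2 : G 2 * F 1 = 2*l'*F 1*F 2 := by linear_combination kF3 - F 2 * hg1
    have h1 : G 2 = 2*l'*F 2 := by
      have h : (G 2 - 2*l'*F 2) * F 1 = 0 := by linear_combination hgg2
      rcases mul_eq_zero.mp h with h | h
      · linear_combination h
      · exact absurd h hF1
    have h2 : G 2 = 2*((l - β)/l)*l'*F 2 := by linear_combination hsE - kF4 + hg1
    have h3 : 2*l'*F 2 * (1 - (l - β)/l) = 0 := by linear_combination h2 - h1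
    rcases mul_eq_zero.mp h3 with h | h
    · rcases mul_eq_zero.mp h with h | h
      · norm_num at h; exact hlne' h
      · exact hF2 h
    · apply hcne1; linear_combination -h
  · -- E mixed, F a-type : contradiction
    exfalso
    have hgg1 : G 1 * E 2 = 2*l'*E 1*E 2 := by linear_combination kE3 - E 1 * hg2'
    have h1 : G 1 = 2*l'*E 1 := by
      have h : (G 1 - 2*l'*E 1) * E 2 = 0 := by linear_combination hgg1
      rcases mul_eq_zero.mp h with h | h
      · linear_combination h
      · exact absurd h hE2
    have h2 : G 1 = 2*((l + β - 1)/l)*l'*E 1 := by linear_combination hsF - kE5 + hg2'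
    have h3 : 2*l'*E 1 * (1 - (l + β - 1)/l) = 0 := by linear_combination h2 - h1
    rcases mul_eq_zero.mp h3 with h | h
    · rcases mul_eq_zero.mp h with h | h
      · norm_num at h; exact hlne' h
      · exact hE1 h
    · apply hdne1; linear_combination -h
  · -- E mixed, F b-type : contradiction
    exfalso
    have hgg2 : G 2 * E 1 = 2*l'*E 1*E 2 := by linear_combination kE3 - E 2 * hg1'
    have h1 : G 2 = 2*l'*E 2 := by
      have h : (G 2 - 2*l'*E 2) * E 1 = 0 := by linear_combination hgg2
      rcases mul_eq_zero.mp h with h | h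
      · linear_combination h
      · exact absurd h hE1
    have h2 : G 2 = 2*((l - β)/l)*l'*E 2 := by linear_combination hsF - kE4 + hg1'
    have h3 : 2*l'*E 2 * (1 - (l - β)/l) = 0 := by linear_combination h2 - h1
    rcases mul_eq_zero.mp h3 with h | h
    · rcases mul_eq_zero.mp h with h | h
      · norm_num at h; exact hlne' h
      · exact hE2 h
    · apply hcne1; linear_combination -h
  · -- E mixed, F mixed : contradiction
    exfalso
    have hne1 : E 1 ≠ F 1 := by
      intro h
      exact hEFne ⟨h, by linear_combination kE2 - kF2 - 2*((l + β - 1)/l)*h⟩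
    have h4cd : (1 - 4*((l - β)/l)*((l + β - 1)/l)) * (E 1 - F 1) = 0 := by
      linear_combination kE1 - kF1 - 2*((l - β)/l) * (kE2 - kF2)
    have hcd : 4*((l - β)/l)*((l + β - 1)/l) = 1 := by
      rcases mul_eq_zero.mp h4cd with h | h
      · linear_combination -h
      · exact absurd (by linear_combination h) hne1
    have hc : 2*((l - β)/l) = 1 := by
      linear_combination kE1 - 2*((l - β)/l)*kE2 + E 1 * hcd
    have hd : 2*((l + β - 1)/l) = 1 := by
      linear_combination kE2 - 2*((l + β - 1)/l)*kE1 + E 2 * hcd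
    have hc2 : (l - β)/l = 1/2 := by linear_combination hc/2
    have hd2 : (l + β - 1)/l = 1/2 := by linear_combination hd/2
    rw [div_eq_div_iff hlne (two_ne_zero : (2:ℝ) ≠ 0)] at hc2 hd2
    linarith only [hc2, hd2, hl1]

/-- The swap of the `a` and `b` coordinates as a linear map. -/
noncomputable def swapMap : (Fin 4 → ℝ) →ₗ[ℝ] (Fin 4 → ℝ) where
  toFun z := ![z 0, z 2, z 1, z 3]
  map_add' x y := by funext i; fin_cases i <;> simp
  map_smul' c x := by funext i; fin_cases i <;> simp

lemma swapMap_apply (z : Fin 4 → ℝ) : swapMap z = ![z 0, z 2, z 1, z 3] := rfl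

lemma swapMap_invol (z : Fin 4 → ℝ) : swapMap (swapMap z) = z := by
  funext i
  fin_cases i <;> simp [swapMap]

/-- The swap of the `a` and `b` coordinates as a linear equivalence. -/
noncomputable def swapEquiv : (Fin 4 → ℝ) ≃ₗ[ℝ] (Fin 4 → ℝ) :=
  LinearEquiv.ofLinear swapMap swapMap
    (LinearMap.ext fun z => swapMap_invol z)
    (LinearMap.ext fun z => swapMap_invol z)

lemma swap_bmul (l β l' β' : ℝ) (h1 : l' = l) (h2 : β' = 1 - β) (x y : Fin 4 → ℝ) :
    (fun z : Fin 4 → ℝ => ![z 0, z 2, z 1, z 3]) (Bmul l' β' x y) =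
      Bmul l β ((fun z : Fin 4 → ℝ => ![z 0, z 2, z 1, z 3]) x)
        ((fun z : Fin 4 → ℝ => ![z 0, z 2, z 1, z 3]) y) := by
  subst h1; subst h2
  funext i
  fin_cases i <;> simp [Bmul] <;> ring

lemma BIso_swap (l β l' β' : ℝ) (h1 : l' = l) (h2 : β' = 1 - β) : BIso l' β' l β := by
  refine ⟨swapEquiv, fun x y => ?_⟩
  have h := swap_bmul l β l' β' h1 h2 x y
  simpa [swapEquiv, LinearEquiv.ofLinear_apply, swapMap_apply] using h

lemma BIso_refl (l β : ℝ) : BIso l β l β :=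
  ⟨LinearEquiv.refl ℝ _, fun _ _ => rfl⟩


/-- The algebras `B'(l, β)` and `B'(l', β')` are isomorphic if and only if `l' = l` and
(`β' = β` or `β' = 1 - β`); in particular, if `(l', β') ≠ (l, β)` they are isomorphic if
and only if `l' = l` and `β' = 1 - β`, an isomorphism being given by the basis change
`(o, a, b, ab) ↦ (o, b, a, ab)`. -/
theorem stmt_19 (l β l' β' : ℝ) (hl0 : 0 < l) (hl1 : l < 1) (hβ0 : 0 < β) (hβ1 : β < 1)
    (hl0' : 0 < l') (hl1' : l' < 1) (hβ0' : 0 < β') (hβ1' : β' < 1) :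
    (BIso l' β' l β ↔ (l' = l ∧ (β' = β ∨ β' = 1 - β))) ∧
    ((l', β') ≠ (l, β) → (BIso l' β' l β ↔ (l' = l ∧ β' = 1 - β))) ∧
    (l' = l → β' = 1 - β →
      ∀ x y : Fin 4 → ℝ,
        (fun z : Fin 4 → ℝ => ![z 0, z 2, z 1, z 3]) (Bmul l' β' x y) =
          Bmul l β ((fun z : Fin 4 → ℝ => ![z 0, z 2, z 1, z 3]) x)
            ((fun z : Fin 4 → ℝ => ![z 0, z 2, z 1, z 3]) y)) := by
  have main : BIso l' β' l β ↔ (l' = l ∧ (β' = β ∨ β' = 1 - β)) := by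
    constructor
    · exact BIso_necessary hl0 hl1 hβ0 hβ1 hl0' hl1' hβ0' hβ1'
    · rintro ⟨h1, h2 | h2⟩
      · rw [h1, h2]; exact BIso_refl l β
      · exact BIso_swap l β l' β' h1 h2
  refine ⟨main, fun hne => ?_, fun h1 h2 x y => swap_bmul l β l' β' h1 h2 x y⟩
  constructor
  · intro h
    obtain ⟨hll, hb⟩ := main.mp h
    rcases hb with hb | hb
    · exact absurd (by rw [hll, hb]) hne
    · exact ⟨hll, hb⟩
  · rintro ⟨h1, h2⟩
    exact BIso_swap l β l' β' h1 h2
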